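/- Left multiplication by a paravector, viewed as a ℂ-linear map on ℂ⁴, has determinant equal to the square of the paravector determinant: for Γ = (α, 𝛃), the linear map T_Γ : (t, 𝐱) ↦ (αt + 𝛃·𝐱, t𝛃 + α𝐱 + i 𝛃×𝐱) on ℂ⁴ satisfies det(T_Γ) = (α² − 𝛃·𝛃)². -/

import Mathlib

noncomputable section
open scoped BigOperators

abbrev Vec3 : Type := Fin 3 → ℂ
abbrev Pv : Type := ℂ × Vec3

def dot3 (a b : Vec3) : ℂ := ∑ i, a i * b i

def cross3 (a b : Vec3) : Vec3 :=
  ![a 1 * b 2 - a 2 * b 1, a 2 * b 0 - a 0 * b 2, a 0 * b 1 - a 1 * b 0]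

def pmul (A B : Pv) : Pv :=
  (A.1 * B.1 + dot3 A.2 B.2,
   fun j => A.1 * B.2 j + B.1 * A.2 j + Complex.I * cross3 A.2 B.2 j)

def detP (A : Pv) : ℂ := A.1 ^ 2 - dot3 A.2 A.2

def revP (A : Pv) : Pv := (A.1, -A.2)

abbrev CPt : Type := Fin 4 → ℂ

def toPv (X : CPt) : Pv := (X 0, fun i => X i.succ)

def ofPv (A : Pv) : CPt := Fin.cons A.1 A.2

def cpd (i : Fin 4) (f : CPt → ℂ) (x : CPt) : ℂ := fderiv ℂ f x (Pi.single i 1)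

def cdiv3 (Φ : CPt → Vec3) (x : CPt) : ℂ := ∑ i : Fin 3, cpd i.succ (fun y => Φ y i) x

def cgrad3 (f : CPt → ℂ) (x : CPt) : Vec3 := fun i => cpd i.succ f x

def ccurl3 (Φ : CPt → Vec3) (x : CPt) : Vec3 :=
  ![cpd 2 (fun y => Φ y 2) x - cpd 3 (fun y => Φ y 1) x,
    cpd 3 (fun y => Φ y 0) x - cpd 1 (fun y => Φ y 2) x,
    cpd 1 (fun y => Φ y 1) x - cpd 2 (fun y => Φ y 0) x]

def Dc (A : CPt → Pv) (x : CPt) : Pv :=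
  (cpd 0 (fun y => (A y).1) x + cdiv3 (fun y => (A y).2) x,
   fun j => cpd 0 (fun y => (A y).2 j) x + cgrad3 (fun y => (A y).1) x j
     + Complex.I * ccurl3 (fun y => (A y).2) x j)

def Dcm (A : CPt → Pv) (x : CPt) : Pv :=
  (cpd 0 (fun y => (A y).1) x - cdiv3 (fun y => (A y).2) x,
   fun j => cpd 0 (fun y => (A y).2 j) x - cgrad3 (fun y => (A y).1) x j
     - Complex.I * ccurl3 (fun y => (A y).2) x j)

set_option maxHeartbeats 1000000 in
lemma ofPv_eq (A : Pv) : ofPv A = ![A.1, A.2 0, A.2 1, A.2 2] := by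
  funext i
  fin_cases i <;> rfl

set_option maxHeartbeats 2000000 in
theorem det_left_mul (Γ : Pv) (f : CPt →ₗ[ℂ] CPt)
    (hf : ∀ X : CPt, f X = ofPv (pmul Γ (toPv X))) :
    LinearMap.det f = (detP Γ) ^ 2 := by
  obtain ⟨a, b⟩ := Γ
  rw [← LinearMap.det_toMatrix (Pi.basisFun ℂ (Fin 4)) f]
  have hm : LinearMap.toMatrix (Pi.basisFun ℂ (Fin 4)) (Pi.basisFun ℂ (Fin 4)) f
      = !![a, b 0, b 1, b 2;
           b 0, a, -Complex.I * b 2, Complex.I * b 1;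
           b 1, Complex.I * b 2, a, -Complex.I * b 0;
           b 2, -Complex.I * b 1, Complex.I * b 0, a] := by
    ext i j
    rw [LinearMap.toMatrix_apply, hf]
    fin_cases i <;> fin_cases j <;>
      · simp [ofPv_eq, pmul, toPv, dot3, cross3,
          Fin.sum_univ_three, Pi.single_apply]
        try ring
  rw [hm]
  simp only [Matrix.det_succ_row_zero, Fin.sum_univ_succ, Fin.sum_univ_zero,
    Matrix.cons_val', Matrix.cons_val_zero, Matrix.cons_val_one, Matrix.head_cons,
    Matrix.submatrix_apply, Matrix.head_fin_const, Matrix.cons_val_fin_one,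
    Matrix.det_fin_one_of, Fin.succ_zero_eq_one, Fin.succ_one_eq_two,
    Matrix.submatrix_submatrix, Function.comp, Matrix.of_apply, Matrix.empty_val',
    Matrix.cons_val_succ, Fin.val_zero, Fin.val_succ, pow_succ, pow_zero]
  simp [detP, dot3, Fin.sum_univ_three, Fin.succAbove, Fin.lt_def,
    show Fin.castSucc (2 : Fin 3) = (2 : Fin 4) from rfl]
  ring_nf
  simp only [Complex.I_sq]
  ring
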